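/- Let q be a doubling weight function with doubling constant D, set w(t) = q(1/(1−t)) for t ∈ [1/2,1), let μ be the Lebesgue–Stieltjes measure on [1/2,1) associated with the increasing function t ↦ −1/w(t), and define f(α) = (∫_{[1/2,1)} t^α dμ(t))^{−1} for real α ≥ 1. Then there exists a constant A depending only on D such that A^{−1}·q(n) ≤ f(n) ≤ A·q(n) for all integers n ≥ 1. -/

import Mathlib

open MeasureTheory

/-- A doubling weight function with doubling constant `D`: a positive, increasing,
continuous function on `[1,∞)` with `q(1) = 1`, `q(x) → ∞`, and `q(2x) ≤ D·q(x)`. -/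
def IsDoublingWeight (q : ℝ → ℝ) (D : ℝ) : Prop :=
  ContinuousOn q (Set.Ici 1) ∧ MonotoneOn q (Set.Ici 1) ∧
  (∀ x : ℝ, 1 ≤ x → 0 < q x) ∧ q 1 = 1 ∧
  Filter.Tendsto q Filter.atTop Filter.atTop ∧
  (∀ x : ℝ, 1 ≤ x → q (2 * x) ≤ D * q x)

/-- `μ` is the Lebesgue–Stieltjes measure on `[1/2, 1)` of the increasing function
`t ↦ -1/w(t)`, where `w(t) = q(1/(1-t))`. -/
def IsRegularizationMeasure (q : ℝ → ℝ) (μ : Measure ℝ) : Prop :=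
  (∀ a b : ℝ, 1/2 ≤ a → a ≤ b → b < 1 →
    μ (Set.Ico a b) = ENNReal.ofReal (1 / q (1 / (1 - a)) - 1 / q (1 / (1 - b)))) ∧
  (∀ a : ℝ, 1/2 ≤ a → a < 1 →
    μ (Set.Ico a 1) = ENNReal.ofReal (1 / q (1 / (1 - a)))) ∧
  μ ((Set.Ico (1/2 : ℝ) 1)ᶜ) = 0

lemma doubling_iter {q : ℝ → ℝ} {D : ℝ} (hD : 0 ≤ D)
    (hq : ∀ x : ℝ, 1 ≤ x → q (2 * x) ≤ D * q x) :
    ∀ (j : ℕ) (x : ℝ), 1 ≤ x → q (2 ^ j * x) ≤ D ^ j * q x := by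
  intro j
  induction j with
  | zero => intro x hx; simp
  | succ j ih =>
    intro x hx
    have h1 : (1:ℝ) ≤ 2 ^ j * x := by
      have : (1:ℝ) ≤ 2 ^ j := one_le_pow₀ (by norm_num)
      nlinarith
    have h2 := hq (2 ^ j * x) h1
    have h3 := ih x hx
    calc q (2 ^ (j+1) * x) = q (2 * (2 ^ j * x)) := by ring_nf
      _ ≤ D * q (2 ^ j * x) := h2
      _ ≤ D * (D ^ j * q x) := by nlinarith
      _ = D ^ (j+1) * q x := by ring

/-- auxiliary dyadic partition points -/
noncomputable def regAuxPt (k : ℕ) : ℝ := 1 - (1/2:ℝ)^k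

lemma regAuxPt_half {k : ℕ} (hk : 1 ≤ k) : 1/2 ≤ regAuxPt k := by
  have : (1/2:ℝ)^k ≤ (1/2:ℝ)^1 := pow_le_pow_of_le_one (by norm_num) (by norm_num) hk
  simp only [regAuxPt, pow_one] at *; linarith

lemma regAuxPt_lt_one (k : ℕ) : regAuxPt k < 1 := by
  have : (0:ℝ) < (1/2:ℝ)^k := by positivity
  simp only [regAuxPt]; linarith

lemma regAuxPt_nonneg {k : ℕ} (hk : 1 ≤ k) : 0 ≤ regAuxPt k :=
  le_trans (by norm_num) (regAuxPt_half hk)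

lemma regAuxPt_mono (k : ℕ) : regAuxPt k ≤ regAuxPt (k+1) := by
  have : (1/2:ℝ)^(k+1) ≤ (1/2:ℝ)^k := pow_le_pow_of_le_one (by norm_num) (by norm_num) (by omega)
  simp only [regAuxPt]; linarith

lemma regAuxPt_inv (k : ℕ) : 1/(1 - regAuxPt k) = (2:ℝ)^k := by
  simp only [regAuxPt, sub_sub_cancel]
  rw [one_div_pow, one_div_one_div]

lemma regAuxPt_one : regAuxPt 1 = 1/2 := by simp [regAuxPt]; norm_num

set_option maxHeartbeats 2000000 in
/-- The regularization `f(α) = (∫_{[1/2,1)} t^α dμ(t))⁻¹` of a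
doubling weight `q` is comparable to `q`: `A⁻¹ q(n) ≤ f(n) ≤ A q(n)` with `A = A(D)`. -/
theorem regularization_comparable (D : ℝ) :
    ∃ A : ℝ, 0 < A ∧ ∀ q : ℝ → ℝ, IsDoublingWeight q D →
      ∀ μ : Measure ℝ, IsRegularizationMeasure q μ →
        ∀ n : ℕ, 1 ≤ n →
          A⁻¹ * q (n : ℝ) ≤ (∫ t in Set.Ico (1/2 : ℝ) 1, t ^ (n : ℝ) ∂μ)⁻¹ ∧
          (∫ t in Set.Ico (1/2 : ℝ) 1, t ^ (n : ℝ) ∂μ)⁻¹ ≤ A * q (n : ℝ) := by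
  have hE1 : (1:ℝ) ≤ max D 1 := le_max_right _ _
  obtain ⟨m, hm⟩ : ∃ m : ℕ, 2 * max D 1 ≤ (2:ℝ) ^ m := by
    obtain ⟨m, hm⟩ := pow_unbounded_of_one_lt (R := ℝ) (2 * max D 1) one_lt_two
    exact ⟨m, hm.le⟩
  have hM1 : (1:ℝ) ≤ (m.factorial : ℝ) * 2 ^ m := by
    have h1 : (1:ℝ) ≤ (m.factorial : ℝ) := by exact_mod_cast m.factorial_pos
    have h2 : (1:ℝ) ≤ 2 ^ m := one_le_pow₀ (by norm_num)
    nlinarith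
  set M : ℝ := (m.factorial : ℝ) * 2 ^ m with hMdef
  set E : ℝ := max D 1 with hEdef
  refine ⟨2 * E + 1 + 2 * E * M, by nlinarith, ?_⟩
  intro q hq μ hμ n hn
  obtain ⟨hqc, hqmono, hqpos, hq1, hqtop, hqD⟩ := hq
  obtain ⟨hμab, hμa1, hμ0⟩ := hμ
  -- basic facts about q
  have hq_ge1 : ∀ x : ℝ, 1 ≤ x → 1 ≤ q x := fun x hx => hq1 ▸ hqmono (by simp) hx hx
  have hD1 : (1:ℝ) ≤ D := by
    have h2 := hqD 1 le_rfl
    have h3 := hq_ge1 2 (by norm_num)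
    rw [hq1] at h2; rw [mul_one, mul_one] at h2; linarith
  have hED : E = D := max_eq_left hD1
  have hn1 : (1:ℝ) ≤ (n:ℝ) := by exact_mod_cast hn
  have hqn : 0 < q n := hqpos _ hn1
  -- measure facts
  have h_ae : Set.Ico (1/2:ℝ) 1 ∈ ae μ := mem_ae_iff.mpr hμ0
  have hμtot : μ Set.univ < ⊤ := by
    have h1 : μ Set.univ ≤ μ (Set.Ico (1/2:ℝ) 1) + μ ((Set.Ico (1/2:ℝ) 1)ᶜ) := by
      rw [← Set.union_compl_self (Set.Ico (1/2:ℝ) 1)]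
      exact measure_union_le _ _
    rw [hμ0, add_zero, hμa1 (1/2) le_rfl (by norm_num)] at h1
    exact lt_of_le_of_lt h1 ENNReal.ofReal_lt_top
  haveI : IsFiniteMeasure μ := ⟨hμtot⟩
  have hint : Integrable (fun t : ℝ => t ^ n) μ := by
    refine (integrable_const (1:ℝ)).mono' ?_ ?_
    · exact (continuous_pow n).aestronglyMeasurable
    · filter_upwards [h_ae] with t ht
      have h0 : (0:ℝ) ≤ t := le_trans (by norm_num) ht.1
      have h1 : t ≤ 1 := ht.2.le
      rw [Real.norm_eq_abs, abs_of_nonneg (pow_nonneg h0 n)]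
      exact pow_le_one₀ h0 h1
  have key : ∀ a : ℝ, 1/2 ≤ a → a < 1 →
      (μ (Set.Ico a 1)).toReal = 1 / q (1/(1-a)) := by
    intro a ha ha1
    have hx1 : (1:ℝ) ≤ 1/(1-a) := by
      rw [le_div_iff₀ (by linarith)]; linarith
    have := hqpos _ hx1
    rw [hμa1 a ha ha1, ENNReal.toReal_ofReal (by positivity)]
  simp only [Real.rpow_natCast]
  set I := ∫ t in Set.Ico (1/2:ℝ) 1, t ^ n ∂μ with hIdef
  -- ### lower bound for I
  have hIlow : 1 / (2 * (D * q n)) ≤ I := by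
    set a0 : ℝ := 1 - 1/(2*(n:ℝ)) with ha0def
    have hnpos : (0:ℝ) < n := by linarith
    have hhalf : 1/(2*(n:ℝ)) ≤ 1/2 := by
      rw [div_le_div_iff₀ (by nlinarith) (by norm_num)]; nlinarith
    have ha0 : 1/2 ≤ a0 := by simp only [ha0def]; linarith
    have ha0lt : a0 < 1 := by
      have : 0 < 1/(2*(n:ℝ)) := by positivity
      simp only [ha0def]; linarith
    have hinv : 1/(1 - a0) = 2*(n:ℝ) := by
      simp only [ha0def]
      rw [sub_sub_cancel, one_div_one_div]
    have hmeas : (μ (Set.Ico a0 1)).toReal = 1 / q (2*(n:ℝ)) := by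
      rw [key a0 ha0 ha0lt, hinv]
    have hstep2 : (1/2 : ℝ) * (μ (Set.Ico a0 1)).toReal ≤ ∫ t in Set.Ico a0 1, t ^ n ∂μ := by
      apply setIntegral_ge_of_const_le_real measurableSet_Ico (measure_ne_top μ _) _
        hint.integrableOn
      intro t ht
      have h1 : a0 ≤ t := ht.1
      have h2 : (1/2:ℝ) ≤ a0 ^ n := by
        have hb := one_add_mul_le_pow (a := -(1/(2*(n:ℝ)))) (by nlinarith) n
        have heq : (1:ℝ) + (n:ℝ) * -(1/(2*(n:ℝ))) = 1/2 := by
          field_simp; ring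
        rw [heq] at hb
        calc (1/2:ℝ) ≤ (1 + -(1/(2*(n:ℝ)))) ^ n := hb
          _ = a0 ^ n := by rw [ha0def]; ring_nf
      have h0 : (0:ℝ) ≤ a0 := le_trans (by norm_num) ha0
      calc (1/2:ℝ) ≤ a0 ^ n := h2
        _ ≤ t ^ n := pow_le_pow_left₀ h0 h1 n
    have hstep1 : ∫ t in Set.Ico a0 1, t ^ n ∂μ ≤ I := by
      apply setIntegral_mono_set hint.integrableOn
      · filter_upwards [ae_restrict_of_ae (by
          filter_upwards [h_ae] with t ht
          exact pow_nonneg (le_trans (by norm_num) ht.1) n)] with t ht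
        exact ht
      · exact HasSubset.Subset.eventuallyLE (Set.Ico_subset_Ico ha0 le_rfl)
    have hq2n : q (2*(n:ℝ)) ≤ D * q n := hqD n hn1
    have hq2npos : 0 < q (2*(n:ℝ)) := hqpos _ (by nlinarith)
    have hfrac : 1/(2*(D * q n)) ≤ (1/2:ℝ) * (1 / q (2*(n:ℝ))) := by
      rw [one_div_mul_eq_div, div_div]
      apply div_le_div_of_nonneg_left (by norm_num) (by positivity)
      nlinarith
    rw [hmeas] at hstep2
    linarith
  have hD0 : (0:ℝ) < D := by linarith
  have hIpos : 0 < I := lt_of_lt_of_le (by positivity) hIlow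
  -- ### upper bound for I
  set K := Nat.log 2 n with hKdef
  have h2K : (2:ℝ) ^ K ≤ (n:ℝ) := by
    exact_mod_cast Nat.pow_log_le_self 2 (by omega)
  have hK2 : (n:ℝ) ≤ (2:ℝ) ^ (K+1) := by
    exact_mod_cast (Nat.lt_pow_succ_log_self (by norm_num) n).le
  -- the induction
  have main : ∀ j : ℕ, j ≤ K →
      (∫ t in Set.Ico (regAuxPt (K+1-j)) 1, t ^ n ∂μ)
        ≤ (1 + D * M * (2 - 2*(1/2:ℝ)^j)) / q n := by
    intro j
    induction j with
    | zero =>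
      intro _
      simp only [Nat.sub_zero]
      have hb : ∫ t in Set.Ico (regAuxPt (K+1)) 1, t ^ n ∂μ
          ≤ 1 * (μ (Set.Ico (regAuxPt (K+1)) 1)).toReal := by
        refine le_trans (le_abs_self _) ?_
        rw [← Real.norm_eq_abs]
        apply norm_setIntegral_le_of_norm_le_const (measure_lt_top μ _)
        intro t ht
        have h0 : (0:ℝ) ≤ t := le_trans (regAuxPt_nonneg (by omega)) ht.1
        rw [Real.norm_eq_abs, abs_of_nonneg (pow_nonneg h0 n)]
        exact pow_le_one₀ h0 ht.2.le
      rw [one_mul, key _ (regAuxPt_half (by omega)) (regAuxPt_lt_one _), regAuxPt_inv] at hb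
      have hqmono2 : q n ≤ q ((2:ℝ)^(K+1)) :=
        hqmono (Set.mem_Ici.2 hn1) (Set.mem_Ici.2 (one_le_pow₀ (by norm_num))) hK2
      calc ∫ t in Set.Ico (regAuxPt (K+1)) 1, t ^ n ∂μ ≤ 1 / q ((2:ℝ)^(K+1)) := hb
        _ ≤ 1 / q n := one_div_le_one_div_of_le hqn hqmono2
        _ = (1 + D * M * (2 - 2*(1/2:ℝ)^0)) / q n := by norm_num
    | succ j ih =>
      intro hjK
      have hj : j ≤ K := by omega
      set k := K - j with hkdef
      have hk1 : 1 ≤ k := by omega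
      have hkj : k + j = K := by omega
      have hidx1 : K + 1 - (j+1) = k := by omega
      have hidx2 : K + 1 - j = k + 1 := by omega
      rw [hidx1]
      rw [hidx2] at ih
      have hsplit : ∫ t in Set.Ico (regAuxPt k) 1, t ^ n ∂μ =
          (∫ t in Set.Ico (regAuxPt k) (regAuxPt (k+1)), t ^ n ∂μ)
            + ∫ t in Set.Ico (regAuxPt (k+1)) 1, t ^ n ∂μ := by
        rw [← setIntegral_union Set.Ico_disjoint_Ico_same measurableSet_Ico
          hint.integrableOn hint.integrableOn,
          Set.Ico_union_Ico_eq_Ico (regAuxPt_mono k) (regAuxPt_lt_one (k+1)).le]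
      have hpiece : (∫ t in Set.Ico (regAuxPt k) (regAuxPt (k+1)), t ^ n ∂μ)
          ≤ D * M * (1/2:ℝ)^j / q n := by
        have hq2k : 0 < q ((2:ℝ)^k) := hqpos _ (one_le_pow₀ (by norm_num))
        have hb0 : (0:ℝ) ≤ regAuxPt (k+1) := regAuxPt_nonneg (by omega)
        have hbound : (∫ t in Set.Ico (regAuxPt k) (regAuxPt (k+1)), t ^ n ∂μ)
            ≤ (regAuxPt (k+1))^n * (μ (Set.Ico (regAuxPt k) (regAuxPt (k+1)))).toReal := by
          refine le_trans (le_abs_self _) ?_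
          rw [← Real.norm_eq_abs]
          apply norm_setIntegral_le_of_norm_le_const (measure_lt_top μ _)
          intro t ht
          have h0 : (0:ℝ) ≤ t := le_trans (regAuxPt_nonneg (by omega)) ht.1
          rw [Real.norm_eq_abs, abs_of_nonneg (pow_nonneg h0 n)]
          exact pow_le_pow_left₀ h0 ht.2.le n
        have hμle : (μ (Set.Ico (regAuxPt k) (regAuxPt (k+1)))).toReal ≤ 1 / q ((2:ℝ)^k) := by
          have h1 : μ (Set.Ico (regAuxPt k) (regAuxPt (k+1))) ≤ μ (Set.Ico (regAuxPt k) 1) :=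
            measure_mono (Set.Ico_subset_Ico le_rfl (regAuxPt_lt_one (k+1)).le)
          have h2 := ENNReal.toReal_mono (measure_ne_top μ _) h1
          rwa [key _ (regAuxPt_half (by omega)) (regAuxPt_lt_one _), regAuxPt_inv] at h2
        have hx : (0:ℝ) < (2:ℝ)^j / 2 := by positivity
        have h2k1 : (2:ℝ)^k * (1/2:ℝ)^k = 1 := by
          rw [← mul_pow]; norm_num
        have hc : (2:ℝ)^K * (1/2:ℝ)^(k+1) = (2:ℝ)^j / 2 := by
          rw [← hkj, pow_add, pow_succ]
          linear_combination ((2:ℝ)^j / 2) * h2k1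
        have hexp1 : regAuxPt (k+1) ≤ Real.exp (-(1/2:ℝ)^(k+1)) := by
          have := Real.add_one_le_exp (-(1/2:ℝ)^(k+1))
          simp only [regAuxPt]; linarith
        have hexp2 : (regAuxPt (k+1))^n ≤ Real.exp (-((2:ℝ)^j / 2)) := by
          calc (regAuxPt (k+1))^n ≤ (Real.exp (-(1/2:ℝ)^(k+1)))^n :=
                pow_le_pow_left₀ hb0 hexp1 n
            _ = Real.exp ((n:ℝ) * -(1/2:ℝ)^(k+1)) := (Real.exp_nat_mul _ n).symm
            _ ≤ Real.exp (-((2:ℝ)^j / 2)) := by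
                apply Real.exp_le_exp.2
                have h5 : (2:ℝ)^j/2 ≤ (n:ℝ) * (1/2:ℝ)^(k+1) := by
                  rw [← hc]
                  exact mul_le_mul_of_nonneg_right h2K (by positivity)
                linarith
        have hexp3 : Real.exp (-((2:ℝ)^j / 2)) ≤ M * ((1/2:ℝ)^m)^j := by
          have h6 := Real.pow_div_factorial_le_exp _ hx.le m
          have h7 : (0:ℝ) < ((2:ℝ)^j/2)^m / m.factorial := by positivity
          have hprod : M * ((1/2:ℝ)^m)^j * (((2:ℝ)^j/2)^m / (m.factorial:ℝ)) = 1 := by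
            have hf : ((m.factorial:ℝ)) ≠ 0 := by positivity
            rw [hMdef]
            field_simp
            rw [← pow_mul, one_div_pow, div_pow ((2:ℝ)^j), ← pow_mul, mul_comm j m]; field_simp
          have h8 : M * ((1/2:ℝ)^m)^j = 1 / (((2:ℝ)^j/2)^m / (m.factorial:ℝ)) :=
            eq_one_div_of_mul_eq_one_left hprod
          rw [Real.exp_neg, h8, ← one_div]
          exact one_div_le_one_div_of_le h7 h6
        have hq2K1 : q ((n:ℝ)) ≤ D^(j+1) * q ((2:ℝ)^k) := by
          have h9 : q ((n:ℝ)) ≤ q ((2:ℝ)^(K+1)) :=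
            hqmono (Set.mem_Ici.2 hn1) (Set.mem_Ici.2 (one_le_pow₀ (by norm_num))) hK2
          have h10 : ((2:ℝ)^(K+1)) = 2^(j+1) * 2^k := by
            rw [← pow_add]; congr 1; omega
          have h11 := doubling_iter (by linarith) hqD (j+1) ((2:ℝ)^k)
            (one_le_pow₀ (by norm_num))
          rw [← h10] at h11
          linarith
        have hfrac : 1 / q ((2:ℝ)^k) ≤ D^(j+1) / q n := by
          rw [div_le_div_iff₀ hq2k hqn, one_mul]
          exact hq2K1
        have hr : D * (1/2:ℝ)^m ≤ 1/2 := by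
          have h2m : 2*D ≤ (2:ℝ)^m := by rw [hED] at hm; exact hm
          have hpm : (0:ℝ) < (2:ℝ)^m := by positivity
          rw [one_div_pow, mul_one_div, div_le_div_iff₀ hpm (by norm_num)]
          linarith
        have hnum : M * ((1/2:ℝ)^m)^j * D^(j+1) ≤ D * M * (1/2:ℝ)^j := by
          have hpow : (D * (1/2:ℝ)^m)^j ≤ (1/2:ℝ)^j :=
            pow_le_pow_left₀ (mul_nonneg (by linarith) (by positivity)) hr j
          have hDM : (0:ℝ) ≤ D * M := by nlinarith
          calc M * ((1/2:ℝ)^m)^j * D^(j+1) = (D * M) * (D * (1/2:ℝ)^m)^j := by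
                rw [mul_pow]; ring
            _ ≤ (D * M) * (1/2:ℝ)^j := mul_le_mul_of_nonneg_left hpow hDM
            _ = D * M * (1/2:ℝ)^j := rfl
        calc (∫ t in Set.Ico (regAuxPt k) (regAuxPt (k+1)), t ^ n ∂μ)
            ≤ (regAuxPt (k+1))^n * (μ (Set.Ico (regAuxPt k) (regAuxPt (k+1)))).toReal := hbound
          _ ≤ Real.exp (-((2:ℝ)^j / 2)) * (1 / q ((2:ℝ)^k)) :=
              mul_le_mul hexp2 hμle ENNReal.toReal_nonneg (Real.exp_nonneg _)
          _ ≤ (M * ((1/2:ℝ)^m)^j) * (D^(j+1) / q n) :=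
              mul_le_mul hexp3 hfrac (by positivity) (mul_nonneg (le_trans zero_le_one hM1) (pow_nonneg (pow_nonneg (by norm_num) m) j))
          _ = (M * ((1/2:ℝ)^m)^j * D^(j+1)) / q n := by rw [mul_div_assoc']
          _ ≤ D * M * (1/2:ℝ)^j / q n := div_le_div_of_nonneg_right hnum hqn.le
      have hih := ih hj
      rw [hsplit]
      have harith : D * M * (1/2:ℝ)^j / q n + (1 + D * M * (2 - 2*(1/2:ℝ)^j)) / q n
          = (1 + D * M * (2 - 2*(1/2:ℝ)^(j+1))) / q n := by
        rw [← add_div]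
        congr 1
        ring
      linarith [harith ▸ add_le_add hpiece hih]
  -- conclude
  have hfin := main K le_rfl
  have hidx : K + 1 - K = 1 := by omega
  rw [hidx, regAuxPt_one] at hfin
  have hIup : I ≤ (2 * E + 1 + 2 * E * M) / q n := by
    refine le_trans hfin (div_le_div_of_nonneg_right ?_ hqn.le)
    have hKpow : (0:ℝ) ≤ (1/2:ℝ)^K := by positivity
    have hKpow2 : (1/2:ℝ)^K ≤ 1 := pow_le_one₀ (by norm_num) (by norm_num)
    rw [hED]
    nlinarith [mul_nonneg (mul_nonneg hD0.le (le_trans zero_le_one hM1)) hKpow,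
      mul_nonneg hD0.le (le_trans zero_le_one hM1)]
  have hC : (0:ℝ) < 2 * E + 1 + 2 * E * M := by nlinarith
  constructor
  · have h2 : ((2*E+1+2*E*M) / q n)⁻¹ ≤ I⁻¹ := by
      apply inv_anti₀ hIpos hIup
    rw [inv_div] at h2
    rw [inv_mul_eq_div]
    exact h2
  · have h3 : 1/((2*E+1+2*E*M) * q n) ≤ I := by
      refine le_trans (one_div_le_one_div_of_le (by positivity) ?_) hIlow
      rw [hED]
      nlinarith [mul_nonneg (mul_nonneg hD0.le (le_trans zero_le_one hM1)) hqn.le, hqn]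
    have h4 := inv_anti₀ (by positivity) h3
    rw [one_div, inv_inv] at h4
    exact le_trans h4 (le_refl _)
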